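/- arXiv:2006.00453 — 3 statements merged into one kernel-verified Lean document; each statement's English description precedes it below -/
import Mathlib

section
/- Let ℓ : Z → ℝ be ε-global (every local minimizer z̄ of ℓ satisfies ℓ(z̄) − inf_{z∈Z} ℓ(z) ≤ ε), and let F : W → Z be continuous with Z = range(F). If F is locally open at a local minimizer w̄ of ℓ ∘ F, then ℓ(F(w̄)) − inf_{w∈W} ℓ(F(w)) ≤ ε. -/
/-- `ℓ` is ε-global on `Z`: every local minimizer of `ℓ` over `Z` is within `ε`
of the infimum of `ℓ` over `Z`. -/
def EpsGlobalOn {E' : Type*} [NormedAddCommGroup E'] (ℓ : E' → ℝ) (Z : Set E') (ε : ℝ) : Prop :=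
  ∀ z₀ ∈ Z, IsLocalMinOn ℓ Z z₀ → ∀ z ∈ Z, ℓ z₀ ≤ ℓ z + ε

/-- If `ℓ` is ε-global on `Z = range F` and `F` is locally open at a
local minimizer `w₀` of `ℓ ∘ F`, then `ℓ (F w₀) − inf_{w ∈ W} ℓ (F w) ≤ ε`. -/
theorem stmt_1 {E E' : Type*} [NormedAddCommGroup E] [NormedSpace ℝ E] [FiniteDimensional ℝ E]
    [NormedAddCommGroup E'] [NormedSpace ℝ E'] [FiniteDimensional ℝ E']
    (W : Set E) (Z : Set E') (hW : IsOpen W)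
    (F : E → E') (ℓ : E' → ℝ) (ε : ℝ) (hε : 0 ≤ ε)
    (hFc : ContinuousOn F W) (hℓc : ContinuousOn ℓ Z)
    (hrange : F '' W = Z)
    (hglob : EpsGlobalOn ℓ Z ε)
    (w₀ : E) (hw₀ : w₀ ∈ W)
    (hopen : ∀ δ > (0:ℝ), ∃ δ' > (0:ℝ),
      Metric.ball (F w₀) δ' ∩ Z ⊆ F '' (Metric.ball w₀ δ ∩ W))
    (hmin : IsLocalMinOn (ℓ ∘ F) W w₀) :
    ∀ w ∈ W, ℓ (F w₀) ≤ ℓ (F w) + ε := by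
  -- From hmin, extract a ball on which ℓ ∘ F ≥ ℓ (F w₀)
  have hmin' : ∀ᶠ x in nhds w₀, x ∈ W → ℓ (F w₀) ≤ ℓ (F x) := by
    have := hmin
    rw [IsLocalMinOn, IsMinFilter, nhdsWithin, Filter.eventually_inf_principal] at this
    exact this
  obtain ⟨δ, hδ, hball⟩ := Metric.eventually_nhds_iff_ball.mp hmin'
  obtain ⟨δ', hδ', hsub⟩ := hopen δ hδ
  -- F w₀ is a local min of ℓ on Z
  have hlm : IsLocalMinOn ℓ Z (F w₀) := by
    rw [IsLocalMinOn, IsMinFilter, nhdsWithin, Filter.eventually_inf_principal]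
    rw [Metric.eventually_nhds_iff_ball]
    refine ⟨δ', hδ', fun z hz hzZ => ?_⟩
    obtain ⟨x, ⟨hx1, hx2⟩, rfl⟩ := hsub ⟨hz, hzZ⟩
    exact hball x hx1 hx2
  have hw₀Z : F w₀ ∈ Z := hrange ▸ ⟨w₀, hw₀, rfl⟩
  intro w hw
  exact hglob (F w₀) hw₀Z hlm (F w) (hrange ▸ ⟨w, hw, rfl⟩)
end

section
/- If ℓ : Z → ℝ is a global function (every local minimizer is a global minimizer) and F : W → Z is an open continuous map with range(F) = Z, then the composition ℓ ∘ F : W → ℝ is a global function. -/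
/-- `ℓ` is a global function on `Z`: every local minimizer of `ℓ` over `Z`
is a global minimizer of `ℓ` over `Z`. -/
def GlobalOn {E' : Type*} [NormedAddCommGroup E'] (ℓ : E' → ℝ) (Z : Set E') : Prop :=
  ∀ z₀ ∈ Z, IsLocalMinOn ℓ Z z₀ → ∀ z ∈ Z, ℓ z₀ ≤ ℓ z

/-- If `ℓ` is a global function on `Z` and `F : W → Z` is an open
continuous map with range `Z`, then `ℓ ∘ F` is a global function on `W`. -/
theorem stmt_2 {E E' : Type*} [NormedAddCommGroup E] [NormedSpace ℝ E] [FiniteDimensional ℝ E]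
    [NormedAddCommGroup E'] [NormedSpace ℝ E'] [FiniteDimensional ℝ E']
    (W : Set E) (Z : Set E') (hW : IsOpen W)
    (F : E → E') (ℓ : E' → ℝ)
    (hFc : ContinuousOn F W) (hℓc : ContinuousOn ℓ Z)
    (hrange : F '' W = Z)
    (hFopen : ∀ U : Set E, IsOpen U → U ⊆ W → ∃ V : Set E', IsOpen V ∧ F '' U = V ∩ Z)
    (hglob : GlobalOn ℓ Z) :
    GlobalOn (ℓ ∘ F) W := by
  intro x₀ hx₀ hloc z hz
  -- extract an open neighborhood U ⊆ W on which ℓ ∘ F ≥ ℓ (F x₀)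
  have hloc' : ∀ᶠ x in nhds x₀, (ℓ ∘ F) x₀ ≤ (ℓ ∘ F) x := by
    have h := hloc
    rwa [IsLocalMinOn, nhdsWithin_eq_nhds.2 (hW.mem_nhds hx₀)] at h
  obtain ⟨t, ht, htop, hxt⟩ := eventually_nhds_iff.1 hloc'
  set U := t ∩ W with hU
  have hUopen : IsOpen U := htop.inter hW
  have hUW : U ⊆ W := Set.inter_subset_right
  obtain ⟨V, hVopen, hFV⟩ := hFopen U hUopen hUW
  have hFx₀Z : F x₀ ∈ Z := hrange ▸ Set.mem_image_of_mem F hx₀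
  have hFx₀V : F x₀ ∈ V ∩ Z := hFV ▸ Set.mem_image_of_mem F ⟨hxt, hx₀⟩
  -- F x₀ is a local min of ℓ on Z
  have hlocZ : IsLocalMinOn ℓ Z (F x₀) := by
    rw [IsLocalMinOn]
    have hmem : V ∩ Z ∈ nhdsWithin (F x₀) Z := by
      rw [Set.inter_comm]
      exact inter_mem_nhdsWithin Z (hVopen.mem_nhds hFx₀V.1)
    filter_upwards [hmem] with w hw
    obtain ⟨x, hxU, hxw⟩ : w ∈ F '' U := hFV ▸ hw
    calc ℓ (F x₀) ≤ ℓ (F x) := ht x hxU.1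
    _ = ℓ w := by rw [hxw]
  exact hglob (F x₀) hFx₀Z hlocZ (F z) (hrange ▸ Set.mem_image_of_mem F hz)
end

section
/- Let g : W → ℝ be twice continuously differentiable on an open set W ⊆ ℝⁿ and let w⋆ ∈ W satisfy ∇g(w⋆) ≠ 0 and η < ‖∇g(w⋆)‖/‖∇²g(w⋆)‖. Then the Jacobian of the normalized-gradient map F(w) = w − η ∇g(w)/‖∇g(w)‖ at w⋆, which equals I − η[∇²g(w⋆)/‖∇g(w⋆)‖³](‖∇g(w⋆)‖²I − ∇g(w⋆)∇g(w⋆)ᵀ), is nonsingular (in fact its symmetric part is positive definite). -/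
open scoped RealInnerProductSpace

/-- If `g` is twice continuously differentiable, `∇g(w⋆) ≠ 0` and
`η ‖∇²g(w⋆)‖ < ‖∇g(w⋆)‖`, then the Jacobian
`I − η [∇²g(w⋆)/‖∇g(w⋆)‖³] (‖∇g(w⋆)‖² I − ∇g(w⋆) ∇g(w⋆)ᵀ)`
of the normalized-gradient map `w ↦ w − η ∇g(w)/‖∇g(w)‖` at `w⋆` has positive
definite symmetric part, and in particular is nonsingular. -/
theorem stmt_8 {n : ℕ} (W : Set (EuclideanSpace ℝ (Fin n))) (hW : IsOpen W)
    (g : EuclideanSpace ℝ (Fin n) → ℝ) (hg : ContDiffOn ℝ 2 g W)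
    (H : EuclideanSpace ℝ (Fin n) →
      (EuclideanSpace ℝ (Fin n) →L[ℝ] EuclideanSpace ℝ (Fin n)))
    (hHess : ∀ w ∈ W, HasFDerivAt (gradient g) (H w) w)
    (hHsym : ∀ w ∈ W, ∀ u v, ⟪H w u, v⟫ = ⟪u, H w v⟫)
    (wstar : EuclideanSpace ℝ (Fin n)) (hwstar : wstar ∈ W)
    (hgrad : gradient g wstar ≠ 0)
    (η : ℝ) (hη₀ : 0 < η) (hη : η * ‖H wstar‖ < ‖gradient g wstar‖) :
    (∀ v : EuclideanSpace ℝ (Fin n), v ≠ 0 →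
      0 < ⟪v, (ContinuousLinearMap.id ℝ (EuclideanSpace ℝ (Fin n)) -
        (η / ‖gradient g wstar‖ ^ 3) • ((H wstar).comp
          (‖gradient g wstar‖ ^ 2 • ContinuousLinearMap.id ℝ (EuclideanSpace ℝ (Fin n)) -
            (innerSL ℝ (gradient g wstar)).smulRight (gradient g wstar)))) v⟫) ∧
    Function.Injective (ContinuousLinearMap.id ℝ (EuclideanSpace ℝ (Fin n)) -
        (η / ‖gradient g wstar‖ ^ 3) • ((H wstar).comp
          (‖gradient g wstar‖ ^ 2 • ContinuousLinearMap.id ℝ (EuclideanSpace ℝ (Fin n)) -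
            (innerSL ℝ (gradient g wstar)).smulRight (gradient g wstar)))) := by
  set b := gradient g wstar with hb
  set A := H wstar with hA
  have hbpos : (0:ℝ) < ‖b‖ := norm_pos_iff.mpr hgrad
  set T := (ContinuousLinearMap.id ℝ (EuclideanSpace ℝ (Fin n)) -
        (η / ‖b‖ ^ 3) • (A.comp
          (‖b‖ ^ 2 • ContinuousLinearMap.id ℝ (EuclideanSpace ℝ (Fin n)) -
            (innerSL ℝ b).smulRight b))) with hT
  have key : ∀ v : EuclideanSpace ℝ (Fin n), v ≠ 0 → 0 < ⟪v, T v⟫ := by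
    intro v hv
    have hv0 : (0:ℝ) < ‖v‖ := norm_pos_iff.mpr hv
    have hTv : T v = v - (η / ‖b‖ ^ 3) • A (‖b‖ ^ 2 • v - ⟪b, v⟫ • b) := by
      simp [hT, ContinuousLinearMap.sub_apply, ContinuousLinearMap.smul_apply,
        ContinuousLinearMap.comp_apply, ContinuousLinearMap.smulRight_apply]
    set m := ‖b‖ ^ 2 • v - ⟪b, v⟫ • b with hm
    have expand : ‖m‖ ^ 2 = ‖b‖^4 * ‖v‖^2 - ‖b‖^2 * ⟪b,v⟫^2 := by
      rw [hm, @norm_sub_sq_real, norm_smul, norm_smul, real_inner_smul_left,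
        real_inner_smul_right, real_inner_comm v b]
      rw [Real.norm_eq_abs, Real.norm_eq_abs, abs_of_nonneg (sq_nonneg ‖b‖),
        mul_pow, mul_pow, sq_abs]
      ring
    have hmnorm : ‖m‖ ≤ ‖b‖ ^ 2 * ‖v‖ := by
      have hB : 0 < ‖b‖^2 * ‖v‖ := by positivity
      nlinarith [expand, sq_nonneg ⟪b,v⟫, hB, norm_nonneg m]
    have hinner : ⟪v, T v⟫ = ‖v‖^2 - (η/‖b‖^3) * ⟪v, A m⟫ := by
      rw [hTv, inner_sub_right, real_inner_self_eq_norm_sq, real_inner_smul_right]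
    have habs : ⟪v, A m⟫ ≤ ‖A‖ * ‖b‖^2 * ‖v‖^2 := by
      calc ⟪v, A m⟫ ≤ |⟪v, A m⟫| := le_abs_self _
        _ ≤ ‖v‖ * ‖A m‖ := abs_real_inner_le_norm _ _
        _ ≤ ‖v‖ * (‖A‖ * ‖m‖) := by
            exact mul_le_mul_of_nonneg_left (A.le_opNorm m) (norm_nonneg v)
        _ ≤ ‖v‖ * (‖A‖ * (‖b‖^2 * ‖v‖)) := by gcongr
        _ = ‖A‖ * ‖b‖^2 * ‖v‖^2 := by ring
    have h4 : (η/‖b‖^3) * ⟪v, A m⟫ ≤ (η/‖b‖^3) * (‖A‖*‖b‖^2*‖v‖^2) :=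
      mul_le_mul_of_nonneg_left habs (by positivity)
    have h5 : (η/‖b‖^3) * (‖A‖*‖b‖^2*‖v‖^2) = (η*‖A‖/‖b‖) * ‖v‖^2 := by
      rw [div_mul_eq_mul_div, div_mul_eq_mul_div,
        div_eq_div_iff (by positivity) (by positivity)]; ring
    have h6 : η*‖A‖/‖b‖ < 1 := (div_lt_one hbpos).mpr hη
    have h7 : (η*‖A‖/‖b‖) * ‖v‖^2 < ‖v‖^2 := by nlinarith [sq_nonneg ‖v‖, mul_pos hv0 hv0]
    rw [hinner]
    linarith [h4, h5 ▸ h4]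
  refine ⟨key, ?_⟩
  intro x y hxy
  by_contra hne
  have hsub : T (x - y) = 0 := by rw [T.map_sub, hxy, sub_self]
  have := key (x - y) (sub_ne_zero.mpr hne)
  rw [hsub, inner_zero_right] at this
  exact lt_irrefl 0 this
end
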